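/- arXiv:1803.05256 — 2 statements merged into one kernel-verified Lean document; each statement's English description precedes it below -/
import Mathlib

section
/- For any γ > 0, the alternating minimization envelope ψ_γ admits the representation ψ_γ(y) = f*(-Aᵀy) - (γ/2)‖Ax(y)‖² + (g*)^γ(y + γAx(y)), where (g*)^γ is the Moreau envelope of g* with parameter γ and x(y) = ∇f*(-Aᵀy). -/
open scoped InnerProductSpace RealInnerProductSpace
open Filter Topology

noncomputable section

abbrev E (n : ℕ) := EuclideanSpace ℝ (Fin n)

/-- Convexity for extended-real-valued functions. -/
def EConvexOn {n : ℕ} (f : E n → EReal) : Prop :=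
  ∀ x y : E n, ∀ a b : ℝ, 0 ≤ a → 0 ≤ b → a + b = 1 →
    f (a • x + b • y) ≤ (a : EReal) * f x + (b : EReal) * f y

def ProperFun {n : ℕ} (f : E n → EReal) : Prop :=
  (∃ x, f x ≠ ⊤) ∧ ∀ x, f x ≠ ⊥

def ProperClosedConvex {n : ℕ} (f : E n → EReal) : Prop :=
  ProperFun f ∧ LowerSemicontinuous f ∧ EConvexOn f

/-- `f` is strongly convex with modulus `μ`: `f - (μ/2)‖·‖²` is convex. -/
def StronglyConvexWithMod {n : ℕ} (μ : ℝ) (f : E n → EReal) : Prop :=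
  EConvexOn (fun x => f x - ((μ / 2 * ‖x‖ ^ 2 : ℝ) : EReal))

/-- Fenchel conjugate. -/
def conjFn {n : ℕ} (f : E n → EReal) (y : E n) : EReal :=
  ⨆ x : E n, ((⟪x, y⟫_ℝ : ℝ) : EReal) - f x

/-- Convex subdifferential. -/
def Subdiff {n : ℕ} (f : E n → EReal) (x : E n) : Set (E n) :=
  {v | ∀ z, f x + ((⟪v, z - x⟫_ℝ : ℝ) : EReal) ≤ f z}

/-- `p` is the proximal point of `x` for `h` with stepsize `γ`. -/
def IsProx {n : ℕ} (γ : ℝ) (h : E n → EReal) (x p : E n) : Prop :=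
  ∀ z : E n, h p + ((1 / (2 * γ) * ‖p - x‖ ^ 2 : ℝ) : EReal) ≤
    h z + ((1 / (2 * γ) * ‖z - x‖ ^ 2 : ℝ) : EReal)

/-- Moreau envelope. -/
def moreauEnv {n : ℕ} (γ : ℝ) (h : E n → EReal) (x : E n) : EReal :=
  ⨅ z : E n, h z + ((1 / (2 * γ) * ‖z - x‖ ^ 2 : ℝ) : EReal)

/-- Dual objective `ψ(y) = f*(-Aᵀy) + g*(y)`. -/
def dualObj {n m : ℕ} (f : E n → EReal) (g : E m → EReal) (A : E n →L[ℝ] E m)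
    (y : E m) : EReal :=
  conjFn f (-(ContinuousLinearMap.adjoint A y)) + conjFn g y

/-- The alternating minimization envelope `ψ_γ(y) = -L_γ(x(y), z_γ(y), y)`. -/
def AME {n m : ℕ} (f : E n → EReal) (g : E m → EReal) (A : E n →L[ℝ] E m)
    (γ : ℝ) (xmin : E m → E n) (zmin : E m → E m) (y : E m) : EReal :=
  -(f (xmin y) + g (zmin y)
    + ((⟪y, A (xmin y) - zmin y⟫_ℝ + γ / 2 * ‖A (xmin y) - zmin y‖ ^ 2 : ℝ) : EReal))



section Aux

variable {k : ℕ}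

lemma ereal_real {X : EReal} (hb : X ≠ ⊥) (ht : X ≠ ⊤) : ∃ r : ℝ, X = (r : ℝ) :=
  ⟨X.toReal, (EReal.coe_toReal ht hb).symm⟩

lemma ereal_le_of_add {r s : ℝ} {X : EReal} (h : (r : EReal) ≤ X + (s : EReal)) :
    ((r - s : ℝ) : EReal) ≤ X := by
  have h1 := add_le_add_left h (-(s : EReal))
  rw [add_assoc] at h1
  have h2 : (s : EReal) + -(s : EReal) = 0 := by
    rw [← EReal.coe_neg, ← EReal.coe_add]; norm_num
  rw [h2, add_zero] at h1
  simpa [EReal.coe_sub, sub_eq_add_neg] using h1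

lemma ereal_coe_sub_le {c l : ℝ} {X : EReal} (h : (l : EReal) ≤ X) :
    (c : EReal) - X ≤ ((c - l : ℝ) : EReal) := by
  rw [EReal.coe_sub]
  exact EReal.sub_le_sub le_rfl h

lemma ereal_ne_top_of_add {X : EReal} {r : ℝ} (h : X + (r : EReal) ≠ ⊤) : X ≠ ⊤ := by
  intro hX; rw [hX] at h; simp [EReal.top_add_coe] at h

lemma norm_add_smul_sq {a b : E k} (t : ℝ) :
    ‖a + t • b‖ ^ 2 = ‖a‖ ^ 2 + 2 * t * ⟪a, b⟫_ℝ + t ^ 2 * ‖b‖ ^ 2 := by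
  rw [norm_add_sq_real, real_inner_smul_right, norm_smul]
  simp [mul_pow, sq_abs]
  ring

lemma le_of_small_slack {a b C : ℝ} (h : ∀ t : ℝ, 0 < t → t ≤ 1 → a ≤ b + t * C) : a ≤ b := by
  by_contra hab
  push_neg at hab
  rcases le_or_gt C 0 with hC | hC
  · have := h 1 one_pos le_rfl; nlinarith
  · have h1 : 0 < min 1 ((a - b) / (2 * C)) := lt_min one_pos (div_pos (by linarith) (by linarith))
    have h2 := h _ h1 (min_le_left _ _)
    have h3 : min 1 ((a - b) / (2 * C)) * C ≤ ((a - b) / (2 * C)) * C :=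
      mul_le_mul_of_nonneg_right (min_le_right _ _) hC.le
    have h4 : ((a - b) / (2 * C)) * C = (a - b) / 2 := by field_simp
    nlinarith

end Aux

/-- Moreau-envelope representation of the AME:
`ψ_γ(y) = f*(-Aᵀy) - (γ/2)‖Ax(y)‖² + (g*)^γ(y + γ Ax(y))`. -/
theorem AME_eq_moreauEnv_repr
    {n m : ℕ} (μ γ : ℝ) (hμ : 0 < μ) (hγ : 0 < γ)
    (f : E n → EReal) (g : E m → EReal) (A : E n →L[ℝ] E m)
    (hf : ProperClosedConvex f) (hsc : StronglyConvexWithMod μ f)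
    (hg : ProperClosedConvex g)
    (hfeas : ∃ x, f x ≠ ⊤ ∧ g (A x) ≠ ⊤)
    (xmin : E m → E n)
    (hx : ∀ y x, f (xmin y) + ((⟪y, A (xmin y)⟫_ℝ : ℝ) : EReal)
        ≤ f x + ((⟪y, A x⟫_ℝ : ℝ) : EReal))
    (zmin : E m → E m)
    (hz : ∀ y, IsProx γ⁻¹ g (γ⁻¹ • y + A (xmin y)) (zmin y)) :
    ∀ y : E m,
      AME f g A γ xmin zmin y =
        (conjFn f (-(ContinuousLinearMap.adjoint A y))
          - ((γ / 2 * ‖A (xmin y)‖ ^ 2 : ℝ) : EReal))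
        + moreauEnv γ (conjFn g) (y + γ • A (xmin y)) := by
  obtain ⟨⟨⟨xf, hxft⟩, hfbot⟩, hflsc, hfconv⟩ := hf
  obtain ⟨⟨⟨zg, hzgt⟩, hgbot⟩, hglsc, hgconv⟩ := hg
  obtain ⟨x₀, hx₀f, hx₀g⟩ := hfeas
  intro y
  set x := xmin y with hxdef
  set z := zmin y with hzdef
  set p : E m := γ⁻¹ • y + A x with hpdef
  set w : E m := y + γ • A x with hwdef
  set u : E m := w - γ • z with hudef
  have hγ0 : γ ≠ 0 := hγ.ne'
  have hprox : ∀ z' : E m,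
      g z + ((1 / (2 * γ⁻¹) * ‖z - p‖ ^ 2 : ℝ) : EReal) ≤
        g z' + ((1 / (2 * γ⁻¹) * ‖z' - p‖ ^ 2 : ℝ) : EReal) := by
    intro z'
    have := hz y z'
    rw [← hxdef, ← hzdef, ← hpdef] at this
    exact this
  have hcγ : (1 : ℝ) / (2 * γ⁻¹) = γ / 2 := by field_simp
  rw [hcγ] at hprox
  -- f x is finite
  obtain ⟨r₀, hr₀⟩ := ereal_real (hfbot x₀) hx₀f
  have hfxt : f x ≠ ⊤ := by
    intro hT
    have h1 := hx y x₀
    rw [← hxdef, hT, hr₀, EReal.top_add_coe, ← EReal.coe_add] at h1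
    exact EReal.coe_ne_top _ (top_le_iff.mp h1)
  obtain ⟨F, hF⟩ := ereal_real (hfbot x) hfxt
  -- g z is finite
  obtain ⟨s₀, hs₀⟩ := ereal_real (hgbot (A x₀)) hx₀g
  have hgzt : g z ≠ ⊤ := by
    intro hT
    have h1 := hprox (A x₀)
    rw [hT, hs₀, EReal.top_add_coe, ← EReal.coe_add] at h1
    exact EReal.coe_ne_top _ (top_le_iff.mp h1)
  obtain ⟨G, hG⟩ := ereal_real (hgbot z) hgzt
  -- adjoint computation
  have hAdj : ∀ v : E n, ⟪v, -(ContinuousLinearMap.adjoint A y)⟫_ℝ = -⟪y, A v⟫_ℝ := by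
    intro v
    rw [inner_neg_right, real_inner_comm, ContinuousLinearMap.adjoint_inner_left]
  -- Step A : conjugate of f
  have hconjf : conjFn f (-(ContinuousLinearMap.adjoint A y)) =
      ((-⟪y, A x⟫_ℝ - F : ℝ) : EReal) := by
    apply le_antisymm
    · simp only [conjFn]
      apply iSup_le
      intro v
      have hlow : ((F + ⟪y, A x⟫_ℝ - ⟪y, A v⟫_ℝ : ℝ) : EReal) ≤ f v := by
        apply ereal_le_of_add
        have h1 := hx y v
        rw [← hxdef, hF, ← EReal.coe_add] at h1
        push_cast
        exact h1
      refine (ereal_coe_sub_le hlow).trans ?_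
      rw [EReal.coe_le_coe_iff, hAdj v]
      ring_nf
      exact le_rfl
    · have h1 := le_iSup (fun v : E n =>
        ((⟪v, -(ContinuousLinearMap.adjoint A y)⟫_ℝ : ℝ) : EReal) - f v) x
      simp only [conjFn]
      refine le_trans ?_ h1
      rw [hF, hAdj x, ← EReal.coe_sub]
  -- Step C : subgradient inequality  u ∈ ∂g(z), where u = γ • (p - z)
  have hu2 : u = γ • (p - z) := by
    rw [hudef, hwdef, hpdef, smul_sub, smul_add, smul_smul, mul_inv_cancel₀ hγ0, one_smul]
  have hsub : ∀ v : E m, ((G + γ * ⟪p - z, v - z⟫_ℝ : ℝ) : EReal) ≤ g v := by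
    intro v
    rcases eq_or_ne (g v) ⊤ with hv | hv
    · rw [hv]; exact le_top
    obtain ⟨Gv, hGv⟩ := ereal_real (hgbot v) hv
    rw [hGv, EReal.coe_le_coe_iff]
    have hIc : ⟪p - z, v - z⟫_ℝ = -⟪z - p, v - z⟫_ℝ := by
      rw [show p - z = -(z - p) by abel, inner_neg_left]
    rw [hIc]
    apply le_of_small_slack (C := γ / 2 * ‖v - z‖ ^ 2)
    intro t ht0 ht1
    have hcvx := hgconv z v (1 - t) t (by linarith) ht0.le (by ring)
    rw [hG, hGv] at hcvx
    have hcvx' : g ((1 - t) • z + t • v) ≤ (((1 - t) * G + t * Gv : ℝ) : EReal) := by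
      refine hcvx.trans (le_of_eq ?_)
      norm_cast
    have hch := (hprox ((1 - t) • z + t • v)).trans (add_le_add_left hcvx' _)
    rw [hG, ← EReal.coe_add, ← EReal.coe_add, EReal.coe_le_coe_iff] at hch
    have hpt : (1 - t) • z + t • v - p = (z - p) + t • (v - z) := by module
    rw [hpt, norm_add_smul_sq] at hch
    have goal2 : t * (G + γ * -⟪z - p, v - z⟫_ℝ) ≤
        t * (Gv + t * (γ / 2 * ‖v - z‖ ^ 2)) := by nlinarith [hch]
    exact le_of_mul_le_mul_left goal2 ht0
  -- Step D : conjugate of g at u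
  have hconjg : conjFn g u = ((⟪z, u⟫_ℝ - G : ℝ) : EReal) := by
    apply le_antisymm
    · simp only [conjFn]
      apply iSup_le
      intro v
      refine (ereal_coe_sub_le (hsub v)).trans ?_
      rw [EReal.coe_le_coe_iff, hu2]
      have e1 : ⟪v, γ • (p - z)⟫_ℝ = γ * ⟪p - z, v⟫_ℝ := by
        rw [real_inner_smul_right, real_inner_comm]
      have e2 : ⟪z, γ • (p - z)⟫_ℝ = γ * ⟪p - z, z⟫_ℝ := by
        rw [real_inner_smul_right, real_inner_comm]
      have e3 : ⟪p - z, v - z⟫_ℝ = ⟪p - z, v⟫_ℝ - ⟪p - z, z⟫_ℝ := inner_sub_right _ _ _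
      rw [e1, e2, e3]; ring_nf; exact le_rfl
    · have h1 := le_iSup (fun v : E m => ((⟪v, u⟫_ℝ : ℝ) : EReal) - g v) z
      simp only [conjFn]
      refine le_trans ?_ h1
      rw [hG, ← EReal.coe_sub]
  -- lower bound for conjFn g
  have hconjg_low : ∀ v : E m, ((⟪z, v⟫_ℝ - G : ℝ) : EReal) ≤ conjFn g v := by
    intro v
    have h1 := le_iSup (fun q : E m => ((⟪q, v⟫_ℝ : ℝ) : EReal) - g q) z
    simp only [conjFn]
    refine le_trans ?_ h1
    rw [hG, ← EReal.coe_sub]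
  -- Step E : Moreau envelope
  have huw : u - w = -(γ • z) := by rw [hudef]; abel
  have hnuw : ‖u - w‖ ^ 2 = γ ^ 2 * ‖z‖ ^ 2 := by
    rw [huw, norm_neg, norm_smul]
    simp [mul_pow, sq_abs]
  have hzu : ⟪z, u⟫_ℝ = ⟪z, w⟫_ℝ - γ * ‖z‖ ^ 2 := by
    rw [hudef, inner_sub_right, real_inner_smul_right, real_inner_self_eq_norm_sq]
  have hmoreau : moreauEnv γ (conjFn g) w =
      ((⟪z, u⟫_ℝ - G + 1 / (2 * γ) * ‖u - w‖ ^ 2 : ℝ) : EReal) := by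
    apply le_antisymm
    · have h1 := iInf_le (fun v : E m =>
        conjFn g v + ((1 / (2 * γ) * ‖v - w‖ ^ 2 : ℝ) : EReal)) u
      simp only [moreauEnv]
      refine h1.trans ?_
      rw [hconjg, ← EReal.coe_add]
    · simp only [moreauEnv]
      apply le_iInf
      intro v
      have step : ((⟪z, u⟫_ℝ - G + 1 / (2 * γ) * ‖u - w‖ ^ 2 : ℝ) : EReal) ≤
          ((⟪z, v⟫_ℝ - G : ℝ) : EReal) + ((1 / (2 * γ) * ‖v - w‖ ^ 2 : ℝ) : EReal) := by
        rw [← EReal.coe_add, EReal.coe_le_coe_iff]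
        have hexp : ‖(v - w) + γ • z‖ ^ 2 =
            ‖v - w‖ ^ 2 + 2 * γ * ⟪v - w, z⟫_ℝ + γ ^ 2 * ‖z‖ ^ 2 := norm_add_smul_sq γ
        have hpos : (0 : ℝ) ≤ 1 / (2 * γ) * ‖(v - w) + γ • z‖ ^ 2 := by positivity
        have hvw : ⟪v - w, z⟫_ℝ = ⟪z, v⟫_ℝ - ⟪z, w⟫_ℝ := by
          rw [real_inner_comm, inner_sub_right]
        have hkey : (⟪z, v⟫_ℝ - G + 1 / (2 * γ) * ‖v - w‖ ^ 2) -
            (⟪z, u⟫_ℝ - G + 1 / (2 * γ) * ‖u - w‖ ^ 2) =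
            1 / (2 * γ) * ‖(v - w) + γ • z‖ ^ 2 := by
          rw [hexp, hvw, hzu, hnuw]
          field_simp
          ring
        linarith [hkey ▸ hpos]
      exact step.trans (add_le_add_left (hconjg_low v) _)
  -- assemble
  simp only [AME, ← hxdef, ← hzdef, ← hwdef]
  rw [hconjf, hmoreau, hF, hG]
  rw [← EReal.coe_add, ← EReal.coe_add, ← EReal.coe_neg, ← EReal.coe_sub, ← EReal.coe_add,
    EReal.coe_eq_coe_iff]
  have e1 : ⟪y, A x - z⟫_ℝ = ⟪y, A x⟫_ℝ - ⟪y, z⟫_ℝ := inner_sub_right _ _ _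
  have e2 : ‖A x - z‖ ^ 2 = ‖A x‖ ^ 2 - 2 * ⟪A x, z⟫_ℝ + ‖z‖ ^ 2 := by
    rw [norm_sub_sq_real]
  have e3 : ⟪z, w⟫_ℝ = ⟪y, z⟫_ℝ + γ * ⟪A x, z⟫_ℝ := by
    rw [hwdef, inner_add_right, real_inner_smul_right, real_inner_comm z y, real_inner_comm z (A x)]
  rw [e1, e2, hzu, e3, hnuw]
  field_simp
  ring
end
end

section
/- Under the standing assumptions, for every y ∈ ℝ^m: (μ_f/2)‖x(y) - x⋆‖² ≤ ψ(y) - inf ψ, where x⋆ is the unique primal solution of minimizing f + g∘A and x(y) = argmin_x { f(x) + ⟨y, Ax⟩ }. -/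
open scoped InnerProductSpace RealInnerProductSpace
open Filter Topology

noncomputable section

section Helpers
variable {n : ℕ}

lemma ereal_cases (x : EReal) : x = ⊥ ∨ x = ⊤ ∨ ∃ r : ℝ, x = (r : EReal) := by
  induction x using EReal.rec with
  | bot => exact Or.inl rfl
  | coe r => exact Or.inr (Or.inr ⟨r, rfl⟩)
  | top => exact Or.inr (Or.inl rfl)

lemma ereal_real_of {x : EReal} (hb : x ≠ ⊥) (ht : x ≠ ⊤) : ∃ r : ℝ, x = (r : EReal) := by
  rcases ereal_cases x with h | h | h
  · exact absurd h hb
  · exact absurd h ht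
  · exact h

lemma mul_le_real {a t : ℝ} (ha : 0 ≤ a) {v : EReal} (hv : v ≤ (t : EReal)) :
    (a : EReal) * v ≤ ((a * t : ℝ) : EReal) := by
  rcases eq_or_lt_of_le ha with h0 | hpos
  · rw [← h0]; simp
  rcases ereal_cases v with h | h | ⟨r, h⟩
  · rw [h, EReal.coe_mul_bot_of_pos hpos]; exact bot_le
  · rw [h] at hv; exact absurd hv (EReal.coe_lt_top t).not_ge
  · rw [h] at hv ⊢
    rw [← EReal.coe_mul, EReal.coe_le_coe_iff] at *
    exact mul_le_mul_of_nonneg_left hv ha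

lemma econvex_bound {f : E n → EReal} (hc : EConvexOn f) {x₁ x₂ : E n} {t₁ t₂ a b : ℝ}
    (h1 : f x₁ ≤ (t₁ : EReal)) (h2 : f x₂ ≤ (t₂ : EReal)) (ha : 0 ≤ a) (hb : 0 ≤ b)
    (hab : a + b = 1) : f (a • x₁ + b • x₂) ≤ ((a * t₁ + b * t₂ : ℝ) : EReal) := by
  refine (hc x₁ x₂ a b ha hb hab).trans ?_
  rw [EReal.coe_add]
  exact add_le_add (mul_le_real ha h1) (mul_le_real hb h2)

lemma sub_real_le_real {a : EReal} {c R : ℝ} (h : a - (c : EReal) ≤ (R : EReal)) :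
    a ≤ ((R + c : ℝ) : EReal) := by
  rcases ereal_cases a with ha | ha | ⟨r, ha⟩
  · rw [ha]; exact bot_le
  · rw [ha, EReal.top_sub_coe] at h; exact absurd h (EReal.coe_lt_top R).not_ge
  · rw [ha] at h ⊢
    rw [← EReal.coe_sub, EReal.coe_le_coe_iff] at h
    rw [EReal.coe_le_coe_iff]; linarith

lemma add_ne_top_left {a b : EReal} {r : ℝ} (h : a + b ≤ (r : EReal)) (hb : b ≠ ⊥) :
    a ≠ ⊤ := by
  intro ha
  rw [ha, EReal.top_add_of_ne_bot hb] at h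
  exact (EReal.coe_lt_top r).not_ge h

lemma epi_closed {f : E n → EReal} (hl : LowerSemicontinuous f) :
    IsClosed {p : E n × ℝ | f p.1 ≤ (p.2 : EReal)} := by
  rw [← isOpen_compl_iff, isOpen_iff_mem_nhds]
  rintro ⟨x, t⟩ hp
  simp only [Set.mem_compl_iff, Set.mem_setOf_eq, not_le] at hp
  obtain ⟨r, hr1, hr2⟩ := EReal.exists_between_coe_real hp
  have h1 : ∀ᶠ x' in 𝓝 x, (r : EReal) < f x' := hl x _ hr2
  have h2 : ∀ᶠ t' : ℝ in 𝓝 t, t' < r := eventually_lt_nhds (EReal.coe_lt_coe_iff.1 hr1)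
  filter_upwards [h1.prod_nhds h2] with p hp'
  simp only [Set.mem_compl_iff, Set.mem_setOf_eq, not_le]
  exact lt_trans (EReal.coe_lt_coe_iff.2 hp'.2) hp'.1

lemma lsc_add_cont {f : E n → EReal} {c : E n → ℝ} (hl : LowerSemicontinuous f)
    (hbot : ∀ x, f x ≠ ⊥) (hc : Continuous c) :
    LowerSemicontinuous fun x => f x + ((c x : ℝ) : EReal) := by
  intro x y hy
  simp only [] at hy
  rcases ereal_cases y with h | h | ⟨yr, h⟩
  · subst h
    refine Filter.Eventually.of_forall fun x' => ?_
    refine bot_lt_iff_ne_bot.2 fun hb => ?_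
    simp only [] at hb
    rcases ereal_cases (f x') with h' | h' | ⟨r, h'⟩
    · exact hbot x' h'
    · rw [h'] at hb; simp [EReal.top_add_of_ne_bot] at hb
    · rw [h', ← EReal.coe_add] at hb; exact EReal.coe_ne_bot _ hb
  · subst h; exact absurd (lt_top_iff_ne_top.1 (hy.trans_le le_top)) (by simp)
  · subst h
    have hx' : ((yr - c x : ℝ) : EReal) < f x := by
      rcases ereal_cases (f x) with h' | h' | ⟨r, h'⟩
      · rw [h'] at hy; simp at hy
      · rw [h']; exact EReal.coe_lt_top _
      · rw [h'] at hy ⊢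
        rw [← EReal.coe_add, gt_iff_lt, EReal.coe_lt_coe_iff] at hy
        rw [EReal.coe_lt_coe_iff]; linarith
    obtain ⟨r, hr1, hr2⟩ := EReal.exists_between_coe_real hx'
    have h1 : ∀ᶠ x' in 𝓝 x, (r : EReal) < f x' := hl x _ hr2
    have h2 : ∀ᶠ x' in 𝓝 x, yr - r < c x' := by
      have : yr - r < c x := by
        rw [EReal.coe_lt_coe_iff] at hr1; linarith
      exact (hc.tendsto x).eventually (eventually_gt_nhds this)
    filter_upwards [h1, h2] with x' h1' h2'
    calc ((yr : ℝ) : EReal) = ((r + (yr - r) : ℝ) : EReal) := by norm_num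
    _ = (r : EReal) + ((yr - r : ℝ) : EReal) := EReal.coe_add _ _
    _ < f x' + (c x' : EReal) := EReal.add_lt_add h1' (EReal.coe_lt_coe_iff.2 h2')

end Helpers
section Minorant
variable {n : ℕ}

lemma affine_minorant {f : E n → EReal} (hpf : ProperFun f)
    (hl : LowerSemicontinuous f) (hc : EConvexOn f) :
    ∃ (s : E n) (b : ℝ), ∀ x, ((⟪s, x⟫_ℝ + b : ℝ) : EReal) ≤ f x := by
  obtain ⟨⟨x₀, hx₀⟩, hbot⟩ := hpf
  obtain ⟨r₀, hr₀⟩ := ereal_real_of (hbot x₀) hx₀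
  set S : Set (E n × ℝ) := {p | f p.1 ≤ (p.2 : EReal)} with hS
  have hclosed : IsClosed S := epi_closed hl
  have hconv : Convex ℝ S := by
    rintro ⟨x₁, t₁⟩ h1 ⟨x₂, t₂⟩ h2 a b ha hb hab
    simp only [hS, Set.mem_setOf_eq] at h1 h2 ⊢
    simpa [smul_eq_mul] using econvex_bound hc h1 h2 ha hb hab
  have hnot : ((x₀, r₀ - 1) : E n × ℝ) ∉ S := by
    simp only [hS, Set.mem_setOf_eq, hr₀, EReal.coe_le_coe_iff]
    push_neg
    linarith
  obtain ⟨φ, u, hu1, hu2⟩ := geometric_hahn_banach_point_closed hconv hclosed hnot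
  set c : ℝ := φ (0, 1) with hc_def
  have hφ : ∀ (x : E n) (t : ℝ), φ (x, t) = φ (x, 0) + t * c := by
    intro x t
    have h : ((x, t) : E n × ℝ) = (x, 0) + t • ((0 : E n), (1 : ℝ)) := by
      simp [Prod.ext_iff]
    rw [h, map_add, map_smul, smul_eq_mul, hc_def]
  have hmem : ∀ t : ℝ, r₀ ≤ t → ((x₀, t) : E n × ℝ) ∈ S := by
    intro t ht
    simp only [hS, Set.mem_setOf_eq, hr₀]
    exact EReal.coe_le_coe_iff.2 ht
  have huc : ∀ t : ℝ, r₀ ≤ t → u < φ (x₀, 0) + t * c := by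
    intro t ht
    have := hu2 _ (hmem t ht)
    rwa [hφ] at this
  have hcpos : 0 < c := by
    rcases lt_trichotomy c 0 with h | h | h
    · exfalso
      set t := max r₀ ((u - φ (x₀, 0)) / c) with ht_def
      have h1 := huc t (le_max_left _ _)
      have h2 : (u - φ (x₀, 0)) / c ≤ t := le_max_right _ _
      have h3 : t * c ≤ u - φ (x₀, 0) := by
        have := (div_le_iff_of_neg h).mp h2
        linarith
      linarith
    · exfalso
      have h1 := huc r₀ le_rfl
      have h2 : φ (x₀, r₀ - 1) < u := hu1
      rw [hφ] at h2
      rw [h] at h1 h2; simp at h1 h2; linarith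
    · exact h
  set L : E n →L[ℝ] ℝ := φ.comp (ContinuousLinearMap.inl ℝ (E n) ℝ) with hL
  have hLval : ∀ x : E n, L x = φ (x, 0) := fun x => rfl
  refine ⟨(-(1 / c)) • (InnerProductSpace.toDual ℝ (E n)).symm L, u / c, fun x => ?_⟩
  rcases eq_or_ne (f x) ⊤ with h | h
  · rw [h]; exact le_top
  obtain ⟨r, hr⟩ := ereal_real_of (hbot x) h
  have hxr : ((x, r) : E n × ℝ) ∈ S := by simp [hS, hr]
  have h1 : u < φ (x, 0) + r * c := by rw [← hφ]; exact hu2 _ hxr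
  have h2 : ⟪(-(1 / c)) • (InnerProductSpace.toDual ℝ (E n)).symm L, x⟫_ℝ
      = -(1 / c) * φ (x, 0) := by
    rw [real_inner_smul_left, InnerProductSpace.toDual_symm_apply, hLval]
  rw [hr, h2, EReal.coe_le_coe_iff]
  have h4 : u / c < φ (x, 0) / c + r := by
    have := div_lt_div_of_pos_right h1 hcpos
    rw [add_div, mul_div_assoc, div_self (ne_of_gt hcpos), mul_one] at this
    exact this
  have h5 : -(1 / c) * φ (x, 0) = -(φ (x, 0) / c) := by ring
  linarith

end Minorant
section Duality

lemma pick_reals {a b : EReal} (ha : a ≠ ⊥) (hb : b ≠ ⊥) {c : ℝ} (h : (c : EReal) < a + b) :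
    ∃ y₁ y₂ : ℝ, (y₁ : EReal) < a ∧ (y₂ : EReal) < b ∧ c < y₁ + y₂ := by
  have hbelow : ∀ x : EReal, x ≠ ⊥ → ∃ r : ℝ, (r : EReal) < x ∧ (x ≠ ⊤ → x.toReal - 1 ≤ r) := by
    intro x hx
    rcases ereal_cases x with h' | h' | ⟨r, h'⟩
    · exact absurd h' hx
    · exact ⟨0, by rw [h']; exact ⟨EReal.coe_lt_top 0, fun ht => absurd rfl ht⟩⟩
    · refine ⟨r - 1, by rw [h', EReal.coe_lt_coe_iff]; linarith, fun _ => by rw [h']; simp⟩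
  rcases eq_or_ne a ⊤ with hat | hat
  · obtain ⟨y₂, hy₂, _⟩ := hbelow b hb
    exact ⟨c - y₂ + 1, y₂, by rw [hat]; exact EReal.coe_lt_top _, hy₂, by linarith⟩
  rcases eq_or_ne b ⊤ with hbt | hbt
  · obtain ⟨y₁, hy₁, _⟩ := hbelow a ha
    exact ⟨y₁, c - y₁ + 1, hy₁, by rw [hbt]; exact EReal.coe_lt_top _, by linarith⟩
  obtain ⟨ra, hra⟩ := ereal_real_of ha hat
  obtain ⟨rb, hrb⟩ := ereal_real_of hb hbt
  rw [hra, hrb, ← EReal.coe_add, EReal.coe_lt_coe_iff] at h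
  refine ⟨ra - (ra + rb - c) / 3, rb - (ra + rb - c) / 3, ?_, ?_, by linarith⟩
  · rw [hra, EReal.coe_lt_coe_iff]; linarith
  · rw [hrb, EReal.coe_lt_coe_iff]; linarith

set_option maxHeartbeats 1000000 in
lemma strong_duality_le {n m : ℕ} {μ : ℝ} (hμ : 0 < μ)
    {f : E n → EReal} {g : E m → EReal} {A : E n →L[ℝ] E m}
    (hf : ProperClosedConvex f) (hsc : StronglyConvexWithMod μ f)
    (hg : ProperClosedConvex g)
    {xstar : E n} {Fs Gs : ℝ} (hFs : f xstar = (Fs : EReal)) (hGs : g (A xstar) = (Gs : EReal))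
    (hxstar : ∀ x, f xstar + g (A xstar) ≤ f x + g (A x)) :
    (⨅ w : E m, dualObj f g A w) ≤ ((-(Fs + Gs) : ℝ) : EReal) := by
  obtain ⟨⟨-, hfbot⟩, hflsc, hfconv⟩ := hf
  obtain ⟨⟨-, hgbot⟩, hglsc, hgconv⟩ := hg
  -- affine minorant for g
  obtain ⟨sg, bg, hgmin⟩ := affine_minorant ⟨⟨A xstar, hGs ▸ EReal.coe_ne_top Gs⟩, hgbot⟩ hglsc hgconv
  have hgmin' : ∀ (z : E m) (r : ℝ), g z = (r : EReal) → ⟪sg, z⟫_ℝ + bg ≤ r := by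
    intro z r hz
    have := hgmin z
    rw [hz, EReal.coe_le_coe_iff] at this
    exact this
  -- quadratic minorant for f
  have hhprop : ProperFun (fun x => f x - ((μ / 2 * ‖x‖ ^ 2 : ℝ) : EReal)) := by
    constructor
    · refine ⟨xstar, ?_⟩
      show f xstar - ((μ / 2 * ‖xstar‖ ^ 2 : ℝ) : EReal) ≠ ⊤
      rw [hFs, ← EReal.coe_sub]
      exact EReal.coe_ne_top _
    · intro x
      show f x - ((μ / 2 * ‖x‖ ^ 2 : ℝ) : EReal) ≠ ⊥
      rcases ereal_cases (f x) with h' | h' | ⟨r, h'⟩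
      · exact absurd h' (hfbot x)
      · rw [h', EReal.top_sub_coe]; simp
      · rw [h', ← EReal.coe_sub]; exact EReal.coe_ne_bot _
  have hhlsc : LowerSemicontinuous (fun x => f x - ((μ / 2 * ‖x‖ ^ 2 : ℝ) : EReal)) := by
    have heq : (fun x : E n => f x - ((μ / 2 * ‖x‖ ^ 2 : ℝ) : EReal))
        = fun x => f x + (((-(μ / 2 * ‖x‖ ^ 2)) : ℝ) : EReal) := by
      funext x
      rw [EReal.coe_neg, sub_eq_add_neg]
    rw [heq]
    exact lsc_add_cont hflsc hfbot ((continuous_const.mul ((continuous_norm).pow 2)).neg)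
  obtain ⟨sf, bf, hfmin⟩ := affine_minorant hhprop hhlsc hsc
  have hfmin' : ∀ (x : E n) (r : ℝ), f x = (r : EReal) →
      μ / 2 * ‖x‖ ^ 2 + ⟪sf, x⟫_ℝ + bf ≤ r := by
    intro x r hx
    have := hfmin x
    rw [hx, ← EReal.coe_sub, EReal.coe_le_coe_iff] at this
    linarith
  -- the perturbation set
  set S : Set (E m × ℝ) := {p | ∃ x, f x + g (A x + p.1) ≤ (p.2 : EReal)} with hS
  have hSconv : Convex ℝ S := by
    rintro ⟨u₁, r₁⟩ h1 ⟨u₂, r₂⟩ h2 a b ha hb hab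
    obtain ⟨x₁, hx₁⟩ := h1
    obtain ⟨x₂, hx₂⟩ := h2
    simp only at hx₁ hx₂
    have hf₁t : f x₁ ≠ ⊤ := add_ne_top_left hx₁ (hgbot _)
    have hg₁t : g (A x₁ + u₁) ≠ ⊤ := add_ne_top_left (by rwa [add_comm] at hx₁) (hfbot _)
    have hf₂t : f x₂ ≠ ⊤ := add_ne_top_left hx₂ (hgbot _)
    have hg₂t : g (A x₂ + u₂) ≠ ⊤ := add_ne_top_left (by rwa [add_comm] at hx₂) (hfbot _)
    obtain ⟨φ₁, hφ₁⟩ := ereal_real_of (hfbot x₁) hf₁t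
    obtain ⟨γ₁, hγ₁⟩ := ereal_real_of (hgbot _) hg₁t
    obtain ⟨φ₂, hφ₂⟩ := ereal_real_of (hfbot x₂) hf₂t
    obtain ⟨γ₂, hγ₂⟩ := ereal_real_of (hgbot _) hg₂t
    rw [hφ₁, hγ₁, ← EReal.coe_add, EReal.coe_le_coe_iff] at hx₁
    rw [hφ₂, hγ₂, ← EReal.coe_add, EReal.coe_le_coe_iff] at hx₂
    refine ⟨a • x₁ + b • x₂, ?_⟩
    simp only [Prod.fst_add, Prod.snd_add, Prod.smul_fst, Prod.smul_snd, smul_eq_mul]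
    have hA : A (a • x₁ + b • x₂) + (a • u₁ + b • u₂)
        = a • (A x₁ + u₁) + b • (A x₂ + u₂) := by
      rw [map_add, map_smul, map_smul, smul_add, smul_add]
      abel
    rw [hA]
    have e1 : f (a • x₁ + b • x₂) ≤ ((a * φ₁ + b * φ₂ : ℝ) : EReal) :=
      econvex_bound hfconv (le_of_eq hφ₁) (le_of_eq hφ₂) ha hb hab
    have e2 : g (a • (A x₁ + u₁) + b • (A x₂ + u₂)) ≤ ((a * γ₁ + b * γ₂ : ℝ) : EReal) :=
      econvex_bound hgconv (le_of_eq hγ₁) (le_of_eq hγ₂) ha hb hab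
    calc f (a • x₁ + b • x₂) + g (a • (A x₁ + u₁) + b • (A x₂ + u₂))
        ≤ ((a * φ₁ + b * φ₂ : ℝ) : EReal) + ((a * γ₁ + b * γ₂ : ℝ) : EReal) := add_le_add e1 e2
      _ = (((a * φ₁ + b * φ₂) + (a * γ₁ + b * γ₂) : ℝ) : EReal) := (EReal.coe_add _ _).symm
      _ ≤ ((a * r₁ + b * r₂ : ℝ) : EReal) := by
          rw [EReal.coe_le_coe_iff]
          nlinarith
  have hmem0 : ∀ k : ℝ, 0 ≤ k → (((0 : E m), Fs + Gs + k) : E m × ℝ) ∈ S := by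
    intro k hk
    refine ⟨xstar, ?_⟩
    simp only [add_zero]
    rw [hFs, hGs, ← EReal.coe_add, EReal.coe_le_coe_iff]
    linarith
  rw [← EReal.le_of_forall_lt_iff_le]
  intro z hz
  rw [EReal.coe_lt_coe_iff] at hz
  set ε : ℝ := z + (Fs + Gs) with hε
  have hεpos : 0 < ε := by rw [hε]; linarith
  -- the key non-membership
  have hnotin : (((0 : E m), Fs + Gs - ε) : E m × ℝ) ∉ closure S := by
    intro hmemcl
    obtain ⟨p, hpS, hplim⟩ := mem_closure_iff_seq_limit.1 hmemcl
    choose xseq hxseq using hpS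
    have hu : Tendsto (fun k => (p k).1) atTop (𝓝 (0 : E m)) :=
      (continuous_fst.tendsto _).comp hplim
    have hr : Tendsto (fun k => (p k).2) atTop (𝓝 (Fs + Gs - ε)) :=
      (continuous_snd.tendsto _).comp hplim
    have hft : ∀ k, f (xseq k) ≠ ⊤ := fun k => add_ne_top_left (hxseq k) (hgbot _)
    have hgt : ∀ k, g (A (xseq k) + (p k).1) ≠ ⊤ := by
      intro k
      have h := hxseq k
      rw [add_comm] at h
      exact add_ne_top_left h (hfbot _)
    set φv : ℕ → ℝ := fun k => (f (xseq k)).toReal with hφv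
    set γv : ℕ → ℝ := fun k => (g (A (xseq k) + (p k).1)).toReal with hγv
    have hφveq : ∀ k, f (xseq k) = ((φv k : ℝ) : EReal) := fun k =>
      (EReal.coe_toReal (hft k) (hfbot _)).symm
    have hγveq : ∀ k, g (A (xseq k) + (p k).1) = ((γv k : ℝ) : EReal) := fun k =>
      (EReal.coe_toReal (hgt k) (hgbot _)).symm
    have hsum : ∀ k, φv k + γv k ≤ (p k).2 := by
      intro k
      have := hxseq k
      rw [hφveq k, hγveq k, ← EReal.coe_add, EReal.coe_le_coe_iff] at this
      exact this
    -- bounds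
    obtain ⟨R, hR⟩ := hr.bddAbove_range
    have hRle : ∀ k, (p k).2 ≤ R := fun k => hR ⟨k, rfl⟩
    obtain ⟨U, hU⟩ := (hu.norm).bddAbove_range
    have hUle : ∀ k, ‖(p k).1‖ ≤ U := fun k => hU ⟨k, rfl⟩
    -- quadratic bound on the xseq
    set C₁ : ℝ := R - bf - bg + ‖sg‖ * U + |bf| with hC₁
    set C₂ : ℝ := ‖sf‖ + ‖sg‖ * ‖A‖ with hC₂
    have hC₂0 : 0 ≤ C₂ := by positivity
    have hxbound : ∀ k, μ / 2 * ‖xseq k‖ ^ 2 ≤ C₁ + C₂ * ‖xseq k‖ := by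
      intro k
      have h1 := hfmin' _ _ (hφveq k)
      have h2 := hgmin' _ _ (hγveq k)
      have h3 : -(‖sf‖ * ‖xseq k‖) ≤ ⟪sf, xseq k⟫_ℝ := by
        have := real_inner_le_norm sf (-(xseq k))
        rw [inner_neg_right, norm_neg] at this
        linarith
      have h4 : -(‖sg‖ * (‖A‖ * ‖xseq k‖ + U)) ≤ ⟪sg, A (xseq k) + (p k).1⟫_ℝ := by
        have hcs := real_inner_le_norm sg (-(A (xseq k) + (p k).1))
        rw [inner_neg_right, norm_neg] at hcs
        have hnorm : ‖A (xseq k) + (p k).1‖ ≤ ‖A‖ * ‖xseq k‖ + U :=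
          (norm_add_le _ _).trans (add_le_add (A.le_opNorm _) (hUle k))
        have hsgn : 0 ≤ ‖sg‖ := norm_nonneg _
        nlinarith
      have h5 := hsum k
      have h6 := hRle k
      have h7 : (0:ℝ) ≤ |bf| := abs_nonneg bf
      rw [hC₁, hC₂]
      nlinarith
    set Rx : ℝ := (2 / μ) * (1 + |C₁| + C₂) + 1 with hRx
    have hxmem : ∀ k, xseq k ∈ Metric.closedBall (0 : E n) Rx := by
      intro k
      rw [Metric.mem_closedBall, dist_zero_right]
      by_contra hcon
      push_neg at hcon
      have hx1 : (1 : ℝ) ≤ ‖xseq k‖ := by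
        have : (0:ℝ) ≤ (2 / μ) * (1 + |C₁| + C₂) := by positivity
        rw [hRx] at hcon; linarith
      have hb := hxbound k
      have hC₁a : C₁ ≤ |C₁| := le_abs_self C₁
      have hkey : 1 + |C₁| + C₂ ≤ μ / 2 * Rx := by
        rw [hRx]
        have heq : μ / 2 * ((2 / μ) * (1 + |C₁| + C₂)) = 1 + |C₁| + C₂ := by
          field_simp
        linarith
      have hx0 : (0:ℝ) < ‖xseq k‖ := lt_of_lt_of_le zero_lt_one hx1
      have p1 : (1 + |C₁| + C₂) * ‖xseq k‖ ≤ μ / 2 * Rx * ‖xseq k‖ :=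
        mul_le_mul_of_nonneg_right hkey hx0.le
      have p2 : μ / 2 * Rx * ‖xseq k‖ ≤ μ / 2 * ‖xseq k‖ ^ 2 := by
        have h9 := mul_le_mul_of_nonneg_left hcon.le
          (by positivity : (0:ℝ) ≤ μ / 2 * ‖xseq k‖)
        nlinarith [h9]
      have p3 : |C₁| ≤ |C₁| * ‖xseq k‖ := le_mul_of_one_le_right (abs_nonneg C₁) hx1
      linarith
    obtain ⟨xbar, -, ψ, hψmono, hψtend⟩ :=
      tendsto_subseq_of_bounded Metric.isBounded_closedBall hxmem
    -- lsc contradiction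
    have hval : ((Fs + Gs - ε : ℝ) : EReal) < f xbar + g (A xbar) := by
      have h1 := hxstar xbar
      rw [hFs, hGs, ← EReal.coe_add] at h1
      refine lt_of_lt_of_le ?_ h1
      rw [EReal.coe_lt_coe_iff]
      linarith
    obtain ⟨y₁, y₂, hy₁, hy₂, hy₁₂⟩ := pick_reals (hfbot xbar) (hgbot (A xbar)) hval
    have hev1 : ∀ᶠ k in atTop, (y₁ : EReal) < f (xseq (ψ k)) :=
      hψtend.eventually (hflsc xbar _ hy₁)
    have hztend : Tendsto (fun k => A (xseq (ψ k)) + (p (ψ k)).1) atTop (𝓝 (A xbar)) := by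
      have h1 : Tendsto (fun k => A (xseq (ψ k))) atTop (𝓝 (A xbar)) :=
        ((A.continuous.tendsto xbar).comp hψtend)
      have h2 : Tendsto (fun k => (p (ψ k)).1) atTop (𝓝 (0 : E m)) :=
        hu.comp hψmono.tendsto_atTop
      simpa using h1.add h2
    have hev2 : ∀ᶠ k in atTop, (y₂ : EReal) < g (A (xseq (ψ k)) + (p (ψ k)).1) :=
      hztend.eventually (hglsc (A xbar) _ hy₂)
    have hrψ : Tendsto (fun k => (p (ψ k)).2) atTop (𝓝 (Fs + Gs - ε)) :=
      hr.comp hψmono.tendsto_atTop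
    have hfinal : Fs + Gs - ε ≥ y₁ + y₂ := by
      refine ge_of_tendsto hrψ ?_
      filter_upwards [hev1, hev2] with k h1 h2
      rw [hφveq (ψ k), EReal.coe_lt_coe_iff] at h1
      rw [hγveq (ψ k), EReal.coe_lt_coe_iff] at h2
      have := hsum (ψ k)
      linarith
    linarith
  -- separation
  obtain ⟨φ, u, hu1, hu2⟩ :=
    geometric_hahn_banach_point_closed hSconv.closure isClosed_closure hnotin
  have hu2' : ∀ q ∈ S, u < φ q := fun q hq => hu2 q (subset_closure hq)
  set c : ℝ := φ (0, 1) with hc_def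
  have hφ0 : φ ((0 : E m), (0 : ℝ)) = 0 := by
    have h00 : ((0 : E m), (0 : ℝ)) = (0 : E m × ℝ) := Prod.mk_zero_zero
    rw [h00, map_zero]
  have hφdec : ∀ (v : E m) (t : ℝ), φ (v, t) = φ (v, 0) + t * c := by
    intro v t
    have h : ((v, t) : E m × ℝ) = (v, 0) + t • ((0 : E m), (1 : ℝ)) := by
      simp [Prod.ext_iff]
    rw [h, map_add, map_smul, smul_eq_mul, hc_def]
  have huc : ∀ k : ℝ, 0 ≤ k → u < (Fs + Gs + k) * c := by
    intro k hk
    have := hu2' _ (hmem0 k hk)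
    rwa [hφdec, hφ0, zero_add] at this
  have hcpos : 0 < c := by
    rcases lt_trichotomy c 0 with h | h | h
    · exfalso
      set k := max 0 ((u - (Fs + Gs) * c) / c) with hk_def
      have h1 := huc k (le_max_left _ _)
      have h2 : (u - (Fs + Gs) * c) / c ≤ k := le_max_right _ _
      have h3 : k * c ≤ u - (Fs + Gs) * c := by
        have := (div_le_iff_of_neg h).mp h2
        linarith
      nlinarith
    · exfalso
      have h1 := huc 0 le_rfl
      have h2 : φ ((0 : E m), Fs + Gs - ε) < u := hu1
      rw [hφdec, hφ0, zero_add] at h2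
      rw [h] at h1 h2
      simp at h1 h2
      linarith
    · exact h
  set L : E m →L[ℝ] ℝ := φ.comp (ContinuousLinearMap.inl ℝ (E m) ℝ) with hL
  have hLval : ∀ v : E m, L v = φ (v, 0) := fun v => rfl
  set w : E m := (-(1 / c)) • (InnerProductSpace.toDual ℝ (E m)).symm L with hw_def
  have hwv : ∀ v : E m, ⟪w, v⟫_ℝ = -(1 / c) * L v := by
    intro v
    rw [hw_def, real_inner_smul_left, InnerProductSpace.toDual_symm_apply]
  -- key pointwise inequality
  have hkey : ∀ (x : E n) (zz : E m),
      ((((⟪x, -(ContinuousLinearMap.adjoint A w)⟫_ℝ : ℝ) : EReal) - f x)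
        + (((⟪zz, w⟫_ℝ : ℝ) : EReal) - g zz)) ≤ ((-(u / c) : ℝ) : EReal) := by
    intro x zz
    rcases eq_or_ne (f x) ⊤ with hfx | hfx
    · rw [hfx]
      have : ((⟪x, -(ContinuousLinearMap.adjoint A w)⟫_ℝ : ℝ) : EReal) - ⊤ = ⊥ := by
        simp [sub_eq_add_neg]
      rw [this, EReal.bot_add]
      exact bot_le
    rcases eq_or_ne (g zz) ⊤ with hgz | hgz
    · rw [hgz]
      have : ((⟪zz, w⟫_ℝ : ℝ) : EReal) - ⊤ = ⊥ := by
        simp [sub_eq_add_neg]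
      rw [this, EReal.add_bot]
      exact bot_le
    obtain ⟨φx, hφx⟩ := ereal_real_of (hfbot x) hfx
    obtain ⟨γz, hγz⟩ := ereal_real_of (hgbot zz) hgz
    have hmem : ((zz - A x, φx + γz) : E m × ℝ) ∈ S := by
      refine ⟨x, ?_⟩
      have hz : A x + (zz - A x) = zz := by abel
      simp only [hz]
      rw [hφx, hγz, ← EReal.coe_add]
    have hineq := hu2' _ hmem
    rw [hφdec] at hineq
    rw [← hLval] at hineq
    rw [map_sub] at hineq
    -- inner product computations
    have hi1 : ⟪x, -(ContinuousLinearMap.adjoint A w)⟫_ℝ = (1 / c) * L (A x) := by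
      rw [inner_neg_right, real_inner_comm, ContinuousLinearMap.adjoint_inner_left, hwv]
      ring
    have hi2 : ⟪zz, w⟫_ℝ = -(1 / c) * L zz := by
      rw [real_inner_comm, hwv]
    rw [hi1, hi2, hφx, hγz, ← EReal.coe_sub, ← EReal.coe_sub, ← EReal.coe_add,
      EReal.coe_le_coe_iff]
    have hc' : (0 : ℝ) < 1 / c := by positivity
    have h3 := mul_lt_mul_of_pos_left hineq hc'
    rw [mul_add, mul_sub] at h3
    have h4 : (1 / c) * ((φx + γz) * c) = φx + γz := by field_simp
    have h5 : -(u / c) = -((1 / c) * u) := by ring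
    rw [h5]
    linarith
  -- bound the dual objective at w
  have hψw : dualObj f g A w ≤ ((-(u / c) : ℝ) : EReal) := by
    rw [dualObj]
    refine EReal.add_le_of_forall_lt fun a' ha' b' hb' => ?_
    rw [conjFn, lt_iSup_iff] at ha' hb'
    obtain ⟨x, hx⟩ := ha'
    obtain ⟨zz, hzz⟩ := hb'
    exact le_of_lt (lt_of_lt_of_le (EReal.add_lt_add hx hzz) (hkey x zz))
  refine le_trans (iInf_le _ w) (hψw.trans ?_)
  rw [EReal.coe_le_coe_iff]
  have h1 : φ ((0 : E m), Fs + Gs - ε) < u := hu1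
  rw [hφdec, hφ0, zero_add] at h1
  have h2 : Fs + Gs - ε < u / c := (lt_div_iff₀ hcpos).2 h1
  rw [hε] at h2
  linarith

end Duality
set_option maxHeartbeats 1000000 in
/-- Primal-dual bound: `(μ_f/2)‖x(y) - x⋆‖² ≤ ψ(y) - inf ψ`. -/
theorem primal_gap_le_dual_gap
    {n m : ℕ} (μ γ : ℝ) (hμ : 0 < μ) (hγ : 0 < γ)
    (f : E n → EReal) (g : E m → EReal) (A : E n →L[ℝ] E m)
    (hf : ProperClosedConvex f) (hsc : StronglyConvexWithMod μ f)
    (hg : ProperClosedConvex g)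
    (hfeas : ∃ x, f x ≠ ⊤ ∧ g (A x) ≠ ⊤)
    (xmin : E m → E n)
    (hx : ∀ y x, f (xmin y) + ((⟪y, A (xmin y)⟫_ℝ : ℝ) : EReal)
        ≤ f x + ((⟪y, A x⟫_ℝ : ℝ) : EReal))
    (zmin : E m → E m)
    (hz : ∀ y, IsProx γ⁻¹ g (γ⁻¹ • y + A (xmin y)) (zmin y))
    (xstar : E n) (hxstar : ∀ x, f xstar + g (A xstar) ≤ f x + g (A x)) :
    ∀ y : E m,
      (⨅ w : E m, dualObj f g A w) + ((μ / 2 * ‖xmin y - xstar‖ ^ 2 : ℝ) : EReal)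
        ≤ dualObj f g A y := by
  intro y
  obtain ⟨x₀, hfx₀, hgx₀⟩ := hfeas
  have hfbot := hf.1.2
  have hgbot := hg.1.2
  obtain ⟨r₀, hr₀⟩ := ereal_real_of (hfbot x₀) hfx₀
  obtain ⟨s₀, hs₀⟩ := ereal_real_of (hgbot (A x₀)) hgx₀
  -- finiteness at xstar
  have h1 := hxstar x₀
  rw [hr₀, hs₀, ← EReal.coe_add] at h1
  have hfst : f xstar ≠ ⊤ := add_ne_top_left h1 (hgbot _)
  have hgst : g (A xstar) ≠ ⊤ := add_ne_top_left (by rwa [add_comm] at h1) (hfbot _)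
  obtain ⟨Fs, hFs⟩ := ereal_real_of (hfbot xstar) hfst
  obtain ⟨Gs, hGs⟩ := ereal_real_of (hgbot (A xstar)) hgst
  -- finiteness at xmin y
  have h2 := hx y x₀
  rw [hr₀, ← EReal.coe_add] at h2
  have hfyt : f (xmin y) ≠ ⊤ := add_ne_top_left h2 (EReal.coe_ne_bot _)
  obtain ⟨F, hF⟩ := ereal_real_of (hfbot (xmin y)) hfyt
  -- abbreviations
  set nd : ℝ := ‖xmin y - xstar‖ ^ 2 with hnd
  have hnd0 : 0 ≤ nd := by rw [hnd]; positivity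
  set iyy : ℝ := ⟪y, A (xmin y)⟫_ℝ with hiyy
  set iys : ℝ := ⟪y, A xstar⟫_ℝ with hiys
  -- key strong-convexity inequality for each t ∈ (0,1)
  have hkey : ∀ t : ℝ, 0 < t → t < 1 →
      F + μ / 2 * ((1 - t) * nd) ≤ Fs + iys - iyy := by
    intro t ht0 ht1
    set xt : E n := (1 - t) • (xmin y) + t • xstar with hxt
    have h3 := hsc (xmin y) xstar (1 - t) t (by linarith) ht0.le (by ring)
    simp only [] at h3
    rw [hF, hFs, ← EReal.coe_sub, ← EReal.coe_sub, ← EReal.coe_mul, ← EReal.coe_mul,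
      ← EReal.coe_add, ← hxt] at h3
    have h4 := sub_real_le_real h3
    have hfxtb : f xt ≠ ⊥ := hfbot xt
    have hfxtt : f xt ≠ ⊤ := by
      intro hcon
      rw [hcon] at h4
      exact (EReal.coe_lt_top _).not_ge h4
    obtain ⟨ft, hft⟩ := ereal_real_of hfxtb hfxtt
    rw [hft, EReal.coe_le_coe_iff] at h4
    have h5 := hx y xt
    rw [hF, hft, ← EReal.coe_add, ← EReal.coe_add, EReal.coe_le_coe_iff] at h5
    have h6 : ⟪y, A xt⟫_ℝ = (1 - t) * iyy + t * iys := by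
      rw [hxt, map_add, map_smul, map_smul, inner_add_right,
        real_inner_smul_right, real_inner_smul_right]
    have h7 : ‖xt‖ ^ 2 = (1 - t) ^ 2 * ‖xmin y‖ ^ 2
        + 2 * ((1 - t) * t * ⟪xmin y, xstar⟫_ℝ) + t ^ 2 * ‖xstar‖ ^ 2 := by
      rw [hxt, norm_add_sq_real, norm_smul, norm_smul, real_inner_smul_left,
        real_inner_smul_right, mul_pow, mul_pow]
      simp [Real.norm_eq_abs, sq_abs]
      ring
    have h8 : nd = ‖xmin y‖ ^ 2 - 2 * ⟪xmin y, xstar⟫_ℝ + ‖xstar‖ ^ 2 := by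
      rw [hnd, norm_sub_sq_real]
    have hn2 : μ / 2 * ((1 - t) * ‖xmin y‖ ^ 2 + t * ‖xstar‖ ^ 2 - ‖xt‖ ^ 2)
        = μ / 2 * (t * (1 - t) * nd) := by
      rw [h7, h8]; ring
    rw [h6] at h5
    have hmul : t * (F + μ / 2 * ((1 - t) * nd)) ≤ t * (Fs + iys - iyy) := by
      nlinarith [h4, h5, hn2]
    exact le_of_mul_le_mul_left hmul ht0
  have hstar : F + μ / 2 * nd ≤ Fs + iys - iyy := by
    refine le_of_forall_pos_le_add fun δ hδ => ?_
    have hden : (0 : ℝ) < μ / 2 * nd + 1 := by positivity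
    set t : ℝ := min (δ / (μ / 2 * nd + 1)) (1 / 2) with ht_def
    have ht0 : 0 < t := lt_min (div_pos hδ hden) (by norm_num)
    have ht1 : t < 1 := lt_of_le_of_lt (min_le_right _ _) (by norm_num)
    have hk := hkey t ht0 ht1
    have htle : t ≤ δ / (μ / 2 * nd + 1) := min_le_left _ _
    have htc : t * (μ / 2 * nd + 1) ≤ δ := by
      rw [div_eq_mul_inv] at htle
      have := mul_le_mul_of_nonneg_right htle hden.le
      rwa [mul_assoc, inv_mul_cancel₀ (ne_of_gt hden), mul_one] at this
    have : μ / 2 * (t * nd) ≤ δ := by nlinarith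
    nlinarith [hk]
  -- strong duality
  have hdual := strong_duality_le hμ hf hsc hg hFs hGs hxstar
  -- lower bound on the dual objective at y
  have hψy : (((-F - iyy) + (iys - Gs) : ℝ) : EReal) ≤ dualObj f g A y := by
    rw [dualObj, EReal.coe_add]
    refine add_le_add ?_ ?_
    · have hinner : ⟪xmin y, -(ContinuousLinearMap.adjoint A y)⟫_ℝ = -iyy := by
        rw [inner_neg_right, real_inner_comm, ContinuousLinearMap.adjoint_inner_left, hiyy]
      have heq : ((-F - iyy : ℝ) : EReal)
          = ((⟪xmin y, -(ContinuousLinearMap.adjoint A y)⟫_ℝ : ℝ) : EReal) - f (xmin y) := by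
        rw [hinner, hF, ← EReal.coe_sub]
        norm_cast
        ring
      rw [heq, conjFn]
      exact le_iSup (fun x => ((⟪x, -(ContinuousLinearMap.adjoint A y)⟫_ℝ : ℝ) : EReal) - f x)
        (xmin y)
    · have heq : ((iys - Gs : ℝ) : EReal)
          = ((⟪A xstar, y⟫_ℝ : ℝ) : EReal) - g (A xstar) := by
        rw [real_inner_comm, hGs, ← EReal.coe_sub, hiys]
      rw [heq, conjFn]
      exact le_iSup (fun x => ((⟪x, y⟫_ℝ : ℝ) : EReal) - g x) (A xstar)
  -- chain everything
  calc (⨅ w : E m, dualObj f g A w) + ((μ / 2 * nd : ℝ) : EReal)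
      ≤ ((-(Fs + Gs) : ℝ) : EReal) + ((μ / 2 * nd : ℝ) : EReal) :=
        add_le_add_left hdual _
    _ = ((-(Fs + Gs) + μ / 2 * nd : ℝ) : EReal) := (EReal.coe_add _ _).symm
    _ ≤ (((-F - iyy) + (iys - Gs) : ℝ) : EReal) := by
        rw [EReal.coe_le_coe_iff]; linarith
    _ ≤ dualObj f g A y := hψy
end
end
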